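/- Let C be a category whose morphisms are all monic. Then C has the Ramsey property for morphisms if and only if all objects of C are rigid and C has the Ramsey property for objects. -/

import Mathlib

open CategoryTheory

/-- The hom-version Ramsey arrow. -/
def homArrow {C : Type*} [Category C] (A B C0 : C) (k : Nat) : Prop :=
  Nonempty (A ⟶ B) ∧ Nonempty (B ⟶ C0) ∧
    ∀ χ : (A ⟶ C0) → Fin k, ∃ (i : Fin k) (w : B ⟶ C0),
      ∀ f : A ⟶ B, χ (f ≫ w) = i

/-- Ramsey property for morphisms. -/
def RamseyMor (C : Type*) [Category C] : Prop :=
  ∀ k : Nat, 2 ≤ k → ∀ A B : C, Nonempty (A ⟶ B) →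
    ∃ C0 : C, homArrow A B C0 k

/-- `f ∼_A f'` iff `f' = f ∘ α` for some automorphism `α` of `A`. -/
def subRel {C : Type*} [Category C] {A B : C} (f f' : A ⟶ B) : Prop :=
  ∃ α : A ≅ A, f' = α.hom ≫ f

/-- The object-version (subobject) Ramsey arrow. -/
def objArrow {C : Type*} [Category C] (A B C0 : C) (k : Nat) : Prop :=
  Nonempty (A ⟶ B) ∧ Nonempty (B ⟶ C0) ∧
    ∀ χ : Quot (subRel (A := A) (B := C0)) → Fin k,
      ∃ (i : Fin k) (w : B ⟶ C0),
        ∀ f : A ⟶ B, χ (Quot.mk _ (f ≫ w)) = i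

/-- Ramsey property for objects. -/
def RamseyObj (C : Type*) [Category C] : Prop :=
  ∀ k : Nat, 2 ≤ k → ∀ A B : C, Nonempty (A ⟶ B) →
    ∃ C0 : C, objArrow A B C0 k

lemma exists_proper {S : Type*} (T : S → S) (ν : S → ℤ) (m : ℕ)
    (hm : m = 0 ∨ 2 ≤ m)
    (hb : ∀ g, m ≠ 0 → 0 ≤ ν g ∧ ν g < m)
    (hs : ∀ g, ν (T g) = if m = 0 then ν g + 1 else (ν g + 1) % m) :
    ∃ χ : S → Fin 3, ∀ g, χ (T g) ≠ χ g := by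
  classical
  have hc3 : ∀ g : S, (if ν g = (m : ℤ) - 1 then 2 else (ν g).natAbs % 2) < 3 := by
    intro g
    split_ifs <;> omega
  refine ⟨fun g => ⟨_, hc3 g⟩, ?_⟩
  intro g h
  have hv : (if ν (T g) = (m : ℤ) - 1 then 2 else (ν (T g)).natAbs % 2)
      = (if ν g = (m : ℤ) - 1 then 2 else (ν g).natAbs % 2) := by
    simpa [Fin.mk.injEq] using h
  have hsg := hs g
  rcases hm with hm0 | hm2
  · rw [if_pos hm0] at hsg
    rw [hm0] at hv
    split_ifs at hv <;> omega
  · have hmne : m ≠ 0 := by omega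
    rw [if_neg hmne] at hsg
    obtain ⟨ha0, ham⟩ := hb g hmne
    have hTg : (ν g = (m : ℤ) - 1 ∧ ν (T g) = 0) ∨
        (ν g ≠ (m : ℤ) - 1 ∧ ν (T g) = ν g + 1) := by
      by_cases hcase : ν g = (m : ℤ) - 1
      · refine Or.inl ⟨hcase, ?_⟩
        rw [hsg, hcase]
        simp
      · refine Or.inr ⟨hcase, ?_⟩
        rw [hsg]
        exact Int.emod_eq_of_lt (by omega) (by omega)
    rcases hTg with ⟨e1, e2⟩ | ⟨e1, e2⟩ <;>
      split_ifs at hv <;>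
      omega

section Aux
variable {C : Type*} [Category C]

lemma aut_pow_comp {A B : C} (β : Aut A) (a b : ℤ) (g : A ⟶ B) :
    (β ^ a).hom ≫ (β ^ b).hom ≫ g = (β ^ (b + a)).hom ≫ g := by
  rw [zpow_add, Aut.Aut_mul_def]
  exact (Category.assoc _ _ _).symm

lemma rigid_of_mor (hmono : ∀ {X Y : C} (f : X ⟶ Y), Mono f)
    (h : RamseyMor C) (A : C) (α : A ≅ A) : α = Iso.refl A := by
  by_contra hα
  classical
  obtain ⟨C0, -, -, hR⟩ := h 3 (by norm_num) A A ⟨𝟙 A⟩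
  let β : Aut A := α
  have hβhom : β.hom = α.hom := rfl
  have hβ1 : β ≠ 1 := hα
  -- cancellation
  have hcancel : ∀ (a b : ℤ) (g : A ⟶ C0),
      (β ^ a).hom ≫ g = (β ^ b).hom ≫ g → β ^ a = β ^ b := by
    intro a b g hg
    haveI := hmono g
    exact Aut.ext ((cancel_mono g).1 hg)
  have hone : (1 : Aut A).hom = 𝟙 A := rfl
  -- the orbit equivalence relation
  let r : (A ⟶ C0) → (A ⟶ C0) → Prop := fun g g' => ∃ n : ℤ, (β ^ n).hom ≫ g = g'
  have hrefl : ∀ g, r g g := fun g => ⟨0, by rw [zpow_zero, hone, Category.id_comp]⟩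
  have hsymm : ∀ {g g'}, r g g' → r g' g := by
    rintro g g' ⟨n, rfl⟩
    exact ⟨-n, by rw [aut_pow_comp]; simp [hone]⟩
  have htrans : ∀ {g g' g''}, r g g' → r g' g'' → r g g'' := by
    rintro g g' g'' ⟨n, rfl⟩ ⟨p, rfl⟩
    exact ⟨n + p, (aut_pow_comp β p n g).symm⟩
  letI s : Setoid (A ⟶ C0) := ⟨r, ⟨hrefl, hsymm, htrans⟩⟩
  let rep : (A ⟶ C0) → (A ⟶ C0) := fun g => (Quotient.mk s g).out
  have hrep : ∀ g, r (rep g) g := fun g => Quotient.mk_out g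
  let n : (A ⟶ C0) → ℤ := fun g => (hrep g).choose
  have hn : ∀ g, (β ^ n g).hom ≫ rep g = g := fun g => (hrep g).choose_spec
  have hrepT : ∀ g : A ⟶ C0, rep (β.hom ≫ g) = rep g := by
    intro g
    have hq : Quotient.mk s (β.hom ≫ g) = Quotient.mk s g :=
      Quotient.sound (hsymm ⟨1, by rw [zpow_one]⟩)
    exact congrArg Quotient.out hq
  have hstep : ∀ g : A ⟶ C0, β ^ (n (β.hom ≫ g)) = β ^ (n g + 1) := by
    intro g
    apply hcancel _ _ (rep g)
    calc (β ^ n (β.hom ≫ g)).hom ≫ rep g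
        = (β ^ n (β.hom ≫ g)).hom ≫ rep (β.hom ≫ g) := by rw [hrepT]
      _ = β.hom ≫ g := hn _
      _ = (β ^ (1 : ℤ)).hom ≫ (β ^ n g).hom ≫ rep g := by rw [zpow_one, hn g]
      _ = (β ^ (n g + 1)).hom ≫ rep g := aut_pow_comp β 1 (n g) (rep g)
  by_cases hfin : ∃ p : ℕ, 0 < p ∧ β ^ (p : ℤ) = 1
  · -- finite order case
    set m := Nat.find hfin with hmdef
    obtain ⟨hm0, hmβ⟩ := Nat.find_spec hfin
    rw [← hmdef] at hm0 hmβ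
    have hm1 : m ≠ 1 := by
      intro h1
      apply hβ1
      have hmb := hmβ
      rw [h1] at hmb
      simpa using hmb
    have hm2 : 2 ≤ m := by omega
    have hmz : (0 : ℤ) < (m : ℤ) := by exact_mod_cast hm0
    have hdvd : ∀ k : ℤ, β ^ k = 1 → ((m : ℤ) ∣ k) := by
      intro k hk
      have hr0 : 0 ≤ k % (m : ℤ) := Int.emod_nonneg k (by omega)
      have hrm : k % (m : ℤ) < (m : ℤ) := Int.emod_lt_of_pos k hmz
      have hβr : β ^ (k % (m : ℤ)) = 1 := by
        have hed : k % (m : ℤ) = k - (m : ℤ) * (k / (m : ℤ)) := Int.emod_def k m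
        rw [hed, zpow_sub, hk, zpow_mul, hmβ, one_zpow, inv_one, one_mul]
      by_contra hnd
      have hne : k % (m : ℤ) ≠ 0 := fun h0 => hnd (Int.dvd_of_emod_eq_zero h0)
      exact Nat.find_min hfin (show (k % (m : ℤ)).toNat < m by omega)
        ⟨by omega, by rwa [Int.toNat_of_nonneg hr0]⟩
    have hcong : ∀ a b : ℤ, β ^ a = β ^ b → a % (m : ℤ) = b % (m : ℤ) := by
      intro a b hab
      have h1 : β ^ (b - a) = 1 := by rw [zpow_sub, ← hab, mul_inv_cancel]
      exact Int.modEq_iff_dvd.mpr (hdvd _ h1)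
    have hsν : ∀ g : A ⟶ C0, n (β.hom ≫ g) % (m : ℤ) =
        if m = 0 then n g % (m : ℤ) + 1 else (n g % (m : ℤ) + 1) % (m : ℤ) := by
      intro g
      rw [if_neg (by omega : m ≠ 0)]
      have e2 : ((n g % (m : ℤ)) + 1) % (m : ℤ) = ((n g) + 1) % (m : ℤ) :=
        Int.ModEq.add_right 1 (Int.emod_emod_of_dvd (n g) dvd_rfl)
      rw [e2]
      exact hcong _ _ (hstep g)
    obtain ⟨χ, hχ⟩ := exists_proper (fun g : A ⟶ C0 => β.hom ≫ g)
      (fun g => n g % (m : ℤ)) m (Or.inr hm2)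
      (fun g _ => ⟨Int.emod_nonneg _ (by omega), Int.emod_lt_of_pos _ hmz⟩)
      hsν
    obtain ⟨i, w, hw⟩ := hR χ
    have h1 := hw (𝟙 A)
    rw [Category.id_comp] at h1
    have h2 := hw α.hom
    exact hχ w (h2.trans h1.symm)
  · -- infinite order case
    have huniq : ∀ k : ℤ, β ^ k = 1 → k = 0 := by
      intro k hk
      by_contra h0
      apply hfin
      rcases lt_or_gt_of_ne h0 with hneg | hpos
      · refine ⟨(-k).toNat, by omega, ?_⟩
        rw [Int.toNat_of_nonneg (by omega), zpow_neg, hk, inv_one]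
      · refine ⟨k.toNat, by omega, ?_⟩
        rwa [Int.toNat_of_nonneg (by omega)]
    have hpow_inj : ∀ a b : ℤ, β ^ a = β ^ b → a = b := by
      intro a b hab
      have h1 : β ^ (a - b) = 1 := by rw [zpow_sub, hab, mul_inv_cancel]
      have := huniq _ h1
      omega
    have hstep' : ∀ g : A ⟶ C0, n (β.hom ≫ g) = n g + 1 :=
      fun g => hpow_inj _ _ (hstep g)
    obtain ⟨χ, hχ⟩ := exists_proper (fun g : A ⟶ C0 => β.hom ≫ g) n 0 (Or.inl rfl)
      (fun g hg => absurd rfl hg)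
      (fun g => by rw [if_pos rfl]; exact hstep' g)
    obtain ⟨i, w, hw⟩ := hR χ
    have h1 := hw (𝟙 A)
    rw [Category.id_comp] at h1
    have h2 := hw α.hom
    exact hχ w (h2.trans h1.symm)

end Aux

theorem stmt1 {C : Type*} [Category C]
    (hmono : ∀ {X Y : C} (f : X ⟶ Y), Mono f) :
    RamseyMor C ↔ ((∀ (A : C) (α : A ≅ A), α = Iso.refl A) ∧ RamseyObj C) := by
  constructor
  · intro hmor
    refine ⟨rigid_of_mor hmono hmor, ?_⟩
    intro k hk A B hAB
    obtain ⟨C0, h1, h2, hR⟩ := hmor k hk A B hAB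
    refine ⟨C0, h1, h2, fun χ => ?_⟩
    obtain ⟨i, w, hw⟩ := hR (fun f => χ (Quot.mk _ f))
    exact ⟨i, w, fun f => hw f⟩
  · rintro ⟨hrig, hobj⟩ k hk A B hAB
    obtain ⟨C0, h1, h2, hR⟩ := hobj k hk A B hAB
    refine ⟨C0, h1, h2, fun χ => ?_⟩
    have hlift : ∀ f f' : A ⟶ C0, subRel f f' → χ f = χ f' := by
      rintro f f' ⟨α, rfl⟩
      rw [hrig A α]
      simp
    obtain ⟨i, w, hw⟩ := hR (Quot.lift χ hlift)
    exact ⟨i, w, fun f => hw f⟩
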